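/- The operator A satisfies a restricted weak type (1,1) inequality: for every measurable set B ⊆ [0,1) and every λ > 0, m{x ∈ (0,1) : A(1_B)(x) > λ} ≤ (1/λ)·m(B). -/

import Mathlib

open MeasureTheory Set
open scoped ENNReal

/-- The maximal operator `A(f)(x) = sup_{t>0} t · m{y ∈ (0,x) : |f(x−y)|/y > t}`,
with values in `[0,∞]`. -/
noncomputable def Aop (f : ℝ → ℝ) (x : ℝ) : ℝ≥0∞ :=
  ⨆ t : {t : ℝ // 0 < t},
    ENNReal.ofReal t.1 * volume {y ∈ Ioo (0 : ℝ) x | |f (x - y)| / y > t.1}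


namespace AopAux

variable (B : Set ℝ) (lam : ℝ)

/-- Distribution function of the set `B`. -/
noncomputable def F (x : ℝ) : ℝ := (volume (B ∩ Iic x)).toReal

/-- Negative of the "sunrise" function `F x - lam * x`. -/
noncomputable def nG (x : ℝ) : ℝ := lam * x - F B x

/-- Running maximum of `nG` on `[0, x]`. -/
noncomputable def k (x : ℝ) : ℝ := sSup (nG B lam '' Icc 0 x)

variable {B lam}

lemma vol_ne_top (hB' : B ⊆ Ico (0:ℝ) 1) (s : Set ℝ) : volume (B ∩ s) ≠ ∞ := by
  refine ne_top_of_le_ne_top ?_ (measure_mono (inter_subset_left.trans hB'))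
  simp [Real.volume_Ico]

lemma F_split (hB : MeasurableSet B) {c x : ℝ} (h : c ≤ x) :
    volume (B ∩ Iic x) = volume (B ∩ Iic c) + volume (B ∩ Ioc c x) := by
  have hU : B ∩ Iic x = (B ∩ Iic c) ∪ (B ∩ Ioc c x) := by
    rw [← inter_union_distrib_left, Iic_union_Ioc_eq_Iic h]
  rw [hU, measure_union ?_ (hB.inter measurableSet_Ioc)]
  exact Disjoint.mono inter_subset_right inter_subset_right
    (Iic_disjoint_Ioc le_rfl)

lemma F_diff (hB : MeasurableSet B) (hB' : B ⊆ Ico (0:ℝ) 1) {c x : ℝ} (h : c ≤ x) :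
    F B x - F B c = (volume (B ∩ Ioc c x)).toReal := by
  rw [F, F, F_split hB h, ENNReal.toReal_add (vol_ne_top hB' _) (vol_ne_top hB' _)]
  ring

lemma F_nonneg (x : ℝ) : 0 ≤ F B x := ENNReal.toReal_nonneg

lemma F_mono (hB : MeasurableSet B) (hB' : B ⊆ Ico (0:ℝ) 1) {c x : ℝ} (h : c ≤ x) :
    F B c ≤ F B x := by
  have := F_diff hB hB' h
  nlinarith [ENNReal.toReal_nonneg (a := volume (B ∩ Ioc c x))]

lemma F_lip (hB : MeasurableSet B) (hB' : B ⊆ Ico (0:ℝ) 1) {c x : ℝ} (h : c ≤ x) :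
    F B x - F B c ≤ x - c := by
  rw [F_diff hB hB' h]
  have h1 : volume (B ∩ Ioc c x) ≤ ENNReal.ofReal (x - c) := by
    refine le_trans (measure_mono inter_subset_right) ?_
    simp [Real.volume_Ioc]
  calc (volume (B ∩ Ioc c x)).toReal ≤ (ENNReal.ofReal (x - c)).toReal :=
        ENNReal.toReal_mono ENNReal.ofReal_ne_top h1
    _ = x - c := ENNReal.toReal_ofReal (by linarith)

lemma F_zero (hB' : B ⊆ Ico (0:ℝ) 1) : F B 0 = 0 := by
  have : B ∩ Iic (0:ℝ) ⊆ {0} := by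
    rintro x ⟨hxB, hx0⟩
    exact le_antisymm hx0 (hB' hxB).1
  have h0 : volume (B ∩ Iic (0:ℝ)) = 0 :=
    le_antisymm (le_trans (measure_mono this) (by simp)) (zero_le)
  simp [F, h0]

lemma F_one (hB' : B ⊆ Ico (0:ℝ) 1) : ENNReal.ofReal (F B 1) = volume B := by
  have : B ∩ Iic (1:ℝ) = B := inter_eq_self_of_subset_left
    (hB'.trans (fun x hx => le_of_lt hx.2))
  rw [F, this, ENNReal.ofReal_toReal]
  simpa using vol_ne_top hB' univ

end AopAux

namespace AopAux

variable {B : Set ℝ} {lam : ℝ}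

lemma nG_bdd (hlam : 0 < lam) {x : ℝ} :
    ∀ y ∈ Icc (0:ℝ) x, nG B lam y ≤ lam * x := by
  intro y hy
  have h1 : 0 ≤ F B y := F_nonneg y
  have h2 : lam * y ≤ lam * x := by nlinarith [hy.2]
  simp only [nG]; linarith

lemma k_ge (hlam : 0 < lam) {x y : ℝ} (hy : y ∈ Icc (0:ℝ) x) :
    nG B lam y ≤ k B lam x :=
  le_csSup ⟨lam * x, fun v ⟨z, hz, hzv⟩ => hzv ▸ nG_bdd hlam z hz⟩
    (mem_image_of_mem _ hy)

lemma k_le {x a : ℝ} (hx : 0 ≤ x) (h : ∀ y ∈ Icc (0:ℝ) x, nG B lam y ≤ a) :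
    k B lam x ≤ a :=
  csSup_le (Nonempty.image _ ⟨0, le_refl 0, hx⟩) (fun v ⟨z, hz, hzv⟩ => hzv ▸ h z hz)

lemma k_mono (hlam : 0 < lam) {x x' : ℝ} (hx : 0 ≤ x) (h : x ≤ x') :
    k B lam x ≤ k B lam x' :=
  k_le hx fun y hy => k_ge hlam ⟨hy.1, hy.2.trans h⟩

lemma k_zero (hB' : B ⊆ Ico (0:ℝ) 1) : k B lam 0 = 0 := by
  have : nG B lam '' Icc (0:ℝ) 0 = {0} := by
    rw [Icc_self, image_singleton, nG, F_zero hB']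
    norm_num
  rw [k, this, csSup_singleton]

lemma k_lip (hB : MeasurableSet B) (hB' : B ⊆ Ico (0:ℝ) 1) (hlam : 0 < lam)
    {x x' : ℝ} (hx : 0 ≤ x) (h : x ≤ x') :
    k B lam x' ≤ k B lam x + lam * (x' - x) := by
  refine k_le (hx.trans h) fun y hy => ?_
  rcases le_total y x with hyx | hyx
  · have := k_ge (B := B) hlam ⟨hy.1, hyx⟩
    nlinarith
  · have h1 : F B x ≤ F B y := F_mono hB hB' hyx
    have h2 : nG B lam x ≤ k B lam x := k_ge hlam ⟨hx, le_refl x⟩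
    have h3 : nG B lam y ≤ nG B lam x + lam * (y - x) := by
      simp only [nG]; nlinarith
    nlinarith [hy.2]

lemma F_cont (hB : MeasurableSet B) (hB' : B ⊆ Ico (0:ℝ) 1) : Continuous (F B) := by
  refine (LipschitzWith.of_dist_le_mul fun x y => ?_).continuous (K := 1)
  have key : ∀ a b : ℝ, a ≤ b → dist (F B a) (F B b) ≤ 1 * dist a b := by
    intro a b hab
    have h1 := F_lip hB hB' hab
    have h2 := F_mono hB hB' hab
    rw [Real.dist_eq, Real.dist_eq, abs_of_nonpos (by linarith), abs_of_nonpos (by linarith)]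
    linarith
  rcases le_total x y with h | h
  · exact key x y h
  · rw [dist_comm, dist_comm x y]; exact key y x h

lemma nG_cont (hB : MeasurableSet B) (hB' : B ⊆ Ico (0:ℝ) 1) :
    Continuous (nG B lam) :=
  (continuous_const.mul continuous_id).sub (F_cont hB hB')

lemma k_max (hB : MeasurableSet B) (hB' : B ⊆ Ico (0:ℝ) 1) {x : ℝ} (hx : 0 ≤ x) :
    ∃ y ∈ Icc (0:ℝ) x, k B lam x = nG B lam y := by
  obtain ⟨y, hy, hmax⟩ := isCompact_Icc.exists_isMaxOn ⟨0, le_refl 0, hx⟩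
    (nG_cont (lam := lam) hB hB').continuousOn
  exact ⟨y, hy, le_antisymm (k_le hx fun z hz => hmax hz) (le_csSup
    ⟨nG B lam y, fun v ⟨z, hz, hzv⟩ => hzv ▸ hmax hz⟩ (mem_image_of_mem _ hy))⟩

end AopAux

namespace AopAux

variable {B : Set ℝ} {lam : ℝ}

/-- The "sunrise" set. -/
def U (B : Set ℝ) (lam : ℝ) : Set ℝ := {x ∈ Ioo (0:ℝ) 1 | nG B lam x < k B lam x}

lemma k_lipOn (hB : MeasurableSet B) (hB' : B ⊆ Ico (0:ℝ) 1) (hlam : 0 < lam) :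
    LipschitzOnWith lam.toNNReal (k B lam) (Ici (0:ℝ)) := by
  rw [lipschitzOnWith_iff_dist_le_mul]
  have key : ∀ a ∈ Ici (0:ℝ), ∀ b ∈ Ici (0:ℝ), a ≤ b →
      dist (k B lam a) (k B lam b) ≤ lam.toNNReal * dist a b := by
    intro a ha b hb hab
    have h1 := k_mono (B := B) hlam ha hab
    have h2 := k_lip hB hB' hlam ha hab
    rw [Real.dist_eq, Real.dist_eq, abs_of_nonpos (by linarith), abs_of_nonpos (by linarith),
      Real.coe_toNNReal _ hlam.le]
    nlinarith
  intro x hx y hy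
  rcases le_total x y with h | h
  · exact key x hx y hy h
  · rw [dist_comm, dist_comm x y]; exact key y hy x hx h

lemma U_open (hB : MeasurableSet B) (hB' : B ⊆ Ico (0:ℝ) 1) (hlam : 0 < lam) :
    IsOpen (U B lam) := by
  have hU : U B lam = Ioo 0 1 ∩ (fun x => k B lam x - nG B lam x) ⁻¹' Ioi 0 := by
    ext x
    simp only [U, mem_setOf_eq, mem_inter_iff, mem_preimage, mem_Ioi, sub_pos]
  rw [hU]
  refine ContinuousOn.isOpen_inter_preimage ?_ isOpen_Ioo isOpen_Ioi
  exact (((k_lipOn hB hB' hlam).continuousOn).mono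
    (fun x (hx : x ∈ Ioo (0:ℝ) 1) => le_of_lt hx.1)).sub
    (nG_cont hB hB').continuousOn

lemma k_const_left (hB : MeasurableSet B) (hB' : B ⊆ Ico (0:ℝ) 1) (hlam : 0 < lam)
    {x : ℝ} (hx : x ∈ U B lam) :
    ∃ q : ℚ, (q : ℝ) ∈ U B lam ∧ k B lam q = k B lam x := by
  obtain ⟨hx1, hx2⟩ := hx
  set ε0 : ℝ := k B lam x - nG B lam x with hε0
  have hε0pos : 0 < ε0 := by simp only [hε0]; linarith [hx2]
  set ε : ℝ := min x (ε0 / 2) with hε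
  have hεpos : 0 < ε := lt_min hx1.1 (by linarith)
  obtain ⟨q, hq1, hq2⟩ := exists_rat_btwn (show x - ε < x by linarith)
  have hq0 : (0:ℝ) < q := by
    have : x - ε ≥ 0 := by simp only [hε]; linarith [min_le_left x (ε0/2)]
    linarith
  have hkey : ∀ y : ℝ, (q:ℝ) ≤ y → y ≤ x → nG B lam y < k B lam x := by
    intro y hy1 hy2
    have h1 : F B x - F B y ≤ x - y := F_lip hB hB' hy2
    have h2 : lam * y ≤ lam * x := by nlinarith
    have h3 : x - y < ε := by linarith
    have h4 : ε ≤ ε0 / 2 := min_le_right _ _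
    have h6 : nG B lam x = lam * x - F B x := rfl
    have h7 : ε0 = k B lam x - (lam * x - F B x) := by rw [hε0, h6]
    show lam * y - F B y < k B lam x
    linarith
  obtain ⟨y, hy, hky⟩ := k_max (lam := lam) hB hB' hx1.1.le
  have hyq : y ≤ q := by
    by_contra hc
    push_neg at hc
    exact absurd (hky ▸ hkey y hc.le hy.2) (lt_irrefl _)
  have hqx : (q:ℝ) ≤ x := hq2.le
  have hkq : k B lam q = k B lam x := by
    refine le_antisymm (k_mono hlam hq0.le hqx) ?_
    rw [hky]
    exact k_ge hlam ⟨hy.1, hyq⟩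
  refine ⟨q, ⟨⟨hq0, hq2.trans hx1.2⟩, ?_⟩, hkq⟩
  rw [hkq]
  exact hkey q le_rfl hqx

lemma image_countable (hB : MeasurableSet B) (hB' : B ⊆ Ico (0:ℝ) 1) (hlam : 0 < lam) :
    (k B lam '' U B lam).Countable := by
  have hsub : k B lam '' U B lam ⊆ k B lam '' (U B lam ∩ range ((↑) : ℚ → ℝ)) := by
    rintro v ⟨x, hxU, rfl⟩
    obtain ⟨q, hqU, hkq⟩ := k_const_left hB hB' hlam hxU
    exact ⟨(q:ℝ), ⟨hqU, ⟨q, rfl⟩⟩, hkq⟩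
  exact (((countable_range _).mono inter_subset_right).image _).mono hsub

end AopAux

namespace AopAux

variable {B : Set ℝ} {lam : ℝ}

lemma main_bound (hB : MeasurableSet B) (hB' : B ⊆ Ico (0:ℝ) 1) (hlam : 0 < lam) :
    ENNReal.ofReal lam * volume (U B lam) ≤ volume B := by
  have hUsub : U B lam ⊆ Icc (0:ℝ) 1 := fun x hx => ⟨hx.1.1.le, hx.1.2.le⟩
  set C : Set ℝ := Icc (0:ℝ) 1 \ U B lam with hC
  -- the image of `C` covers `Icc 0 (k 1)` up to a countable set
  have hk1nonneg : 0 ≤ k B lam 1 := by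
    have h := k_ge (B := B) hlam (show (0:ℝ) ∈ Icc (0:ℝ) 1 by constructor <;> norm_num)
    have h0 : nG B lam 0 = 0 := by
      simp only [nG, F_zero hB']; ring
    linarith [h0 ▸ h]
  have hIVT : Icc (0:ℝ) (k B lam 1) ⊆ k B lam '' Icc 0 1 := by
    have h := intermediate_value_Icc (zero_le_one (α := ℝ))
      ((k_lipOn hB hB' hlam).continuousOn.mono (fun x (hx : x ∈ Icc (0:ℝ) 1) => hx.1))
    rwa [k_zero hB'] at h
  have himg : k B lam '' Icc 0 1 ⊆ (k B lam '' C) ∪ (k B lam '' U B lam) := by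
    rw [← image_union]
    exact image_mono (fun x hx => by
      by_cases hxU : x ∈ U B lam
      · exact Or.inr hxU
      · exact Or.inl ⟨hx, hxU⟩)
  have hstep1 : ENNReal.ofReal (k B lam 1) ≤ volume (k B lam '' C) := by
    calc ENNReal.ofReal (k B lam 1) = volume (Icc (0:ℝ) (k B lam 1)) := by
          rw [Real.volume_Icc, sub_zero]
      _ ≤ volume ((k B lam '' C) ∪ (k B lam '' U B lam)) :=
          measure_mono (hIVT.trans himg)
      _ ≤ volume (k B lam '' C) + volume (k B lam '' U B lam) := measure_union_le _ _
      _ = volume (k B lam '' C) := by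
          rw [(image_countable hB hB' hlam).measure_zero, add_zero]
  have hstep2 : volume (k B lam '' C) ≤ ENNReal.ofReal lam * volume C := by
    have h := ((k_lipOn hB hB' hlam).mono
      (fun x (hx : x ∈ C) => hx.1.1)).hausdorffMeasure_image_le (zero_le_one (α := ℝ))
    rw [ENNReal.rpow_one] at h
    rw [← hausdorffMeasure_real]
    exact h
  have hk1ge : lam - F B 1 ≤ k B lam 1 := by
    have h := k_ge (B := B) hlam (show (1:ℝ) ∈ Icc (0:ℝ) 1 by constructor <;> norm_num)
    have : nG B lam 1 = lam - F B 1 := by simp only [nG]; ring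
    linarith [this ▸ h]
  have hCfin : ENNReal.ofReal lam * volume C ≠ ∞ := by
    refine ENNReal.mul_ne_top ENNReal.ofReal_ne_top ?_
    refine ne_top_of_le_ne_top ?_ (measure_mono diff_subset)
    simp [Real.volume_Icc]
  have hsum : ENNReal.ofReal lam * volume (U B lam) + ENNReal.ofReal lam * volume C
      = ENNReal.ofReal lam := by
    rw [← mul_add]
    have hmeas : NullMeasurableSet (U B lam) volume :=
      (U_open hB hB' hlam).measurableSet.nullMeasurableSet
    have := measure_add_diff hmeas (Icc (0:ℝ) 1)
    rw [union_eq_self_of_subset_left hUsub] at this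
    rw [this, Real.volume_Icc]
    norm_num
  have hle : ENNReal.ofReal lam * volume (U B lam) + ENNReal.ofReal lam * volume C
      ≤ ENNReal.ofReal (F B 1) + ENNReal.ofReal lam * volume C := by
    rw [hsum]
    calc ENNReal.ofReal lam ≤ ENNReal.ofReal (F B 1 + k B lam 1) :=
          ENNReal.ofReal_le_ofReal (by linarith)
      _ = ENNReal.ofReal (F B 1) + ENNReal.ofReal (k B lam 1) :=
          ENNReal.ofReal_add (F_nonneg 1) hk1nonneg
      _ ≤ ENNReal.ofReal (F B 1) + ENNReal.ofReal lam * volume C :=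
          add_le_add_right (hstep1.trans hstep2) _
  have hcancel := (ENNReal.add_le_add_iff_right hCfin).mp hle
  rwa [F_one hB'] at hcancel

end AopAux

namespace AopAux

variable {B : Set ℝ} {lam : ℝ}

lemma subset_U (hB : MeasurableSet B) (hB' : B ⊆ Ico (0:ℝ) 1) (hlam : 0 < lam) :
    {x ∈ Ioo (0:ℝ) 1 |
      ENNReal.ofReal lam < Aop (Set.indicator B (fun _ => (1 : ℝ))) x} ⊆ U B lam := by
  rintro x ⟨hx1, hx2⟩
  rw [Aop, lt_iSup_iff] at hx2
  obtain ⟨⟨t, ht⟩, hlt⟩ := hx2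
  simp only at hlt
  set c : ℝ := max (x - 1/t) 0 with hcdef
  have hc0 : 0 ≤ c := le_max_right _ _
  have hcx : c < x := by
    refine max_lt ?_ hx1.1
    have h1t : 0 < 1/t := by positivity
    linarith
  have hxc : x - c ≤ 1/t := by
    have : x - 1/t ≤ c := le_max_left _ _
    linarith
  have hsubS : {y ∈ Ioo (0 : ℝ) x | |Set.indicator B (fun _ => (1:ℝ)) (x - y)| / y > t}
      ⊆ (fun y => x - y) ⁻¹' (B ∩ Ioc c x) := by
    rintro y ⟨hy1, hy2⟩
    by_cases hmem : x - y ∈ B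
    · have h1y : (1:ℝ)/y > t := by
        rwa [Set.indicator_of_mem hmem, abs_one] at hy2
      have hyt : y < 1/t := by
        have ht1 : t * y < 1 := by
          rw [gt_iff_lt, lt_div_iff₀ hy1.1] at h1y
          linarith [h1y]
        rw [lt_div_iff₀ ht]
        linarith
      show x - y ∈ B ∩ Ioc c x
      exact ⟨hmem, max_lt (by linarith) (by linarith [hy1.2]), by linarith [hy1.1]⟩
    · exfalso
      rw [Set.indicator_of_notMem hmem, abs_zero, zero_div] at hy2
      exact absurd (ht.trans hy2) (lt_irrefl _)
  have hvolS : volume {y ∈ Ioo (0 : ℝ) x | |Set.indicator B (fun _ => (1:ℝ)) (x - y)| / y > t}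
      ≤ volume (B ∩ Ioc c x) := by
    refine (measure_mono hsubS).trans_eq ?_
    exact (Measure.measurePreserving_sub_left volume x).measure_preimage
      (hB.inter measurableSet_Ioc).nullMeasurableSet
  have hνne : volume (B ∩ Ioc c x) ≠ ∞ := vol_ne_top hB' _
  have hlt2 : ENNReal.ofReal lam < ENNReal.ofReal (t * (volume (B ∩ Ioc c x)).toReal) := by
    rw [ENNReal.ofReal_mul ht.le, ENNReal.ofReal_toReal hνne]
    exact hlt.trans_le (mul_le_mul_right hvolS _)
  have hreal : lam < t * (F B x - F B c) := by
    rw [F_diff hB hB' hcx.le]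
    exact (ENNReal.ofReal_lt_ofReal_iff_of_nonneg hlam.le).mp hlt2
  have htc : t * (x - c) ≤ 1 := by
    have h := mul_le_mul_of_nonneg_left hxc ht.le
    rwa [mul_one_div, div_self ht.ne'] at h
  have hΔ : 0 ≤ F B x - F B c := sub_nonneg.mpr (F_mono hB hB' hcx.le)
  have hfinal : lam * (x - c) < F B x - F B c := by nlinarith
  refine ⟨hx1, ?_⟩
  have hnG : nG B lam x < nG B lam c := by simp only [nG]; nlinarith
  exact hnG.trans_le (k_ge hlam ⟨hc0, hcx.le⟩)

end AopAux


/-- The operator `A` satisfies a restricted weak type `(1,1)` inequality: on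
characteristic functions of measurable subsets of `[0,1)`,
`m{x ∈ (0,1) : A(1_B)(x) > λ} ≤ (1/λ)·m(B)` for every `λ > 0`. -/
theorem Aop_restricted_weak_type_one_one
    (B : Set ℝ) (hB : MeasurableSet B) (hB' : B ⊆ Ico (0 : ℝ) 1)
    (lam : ℝ) (hlam : 0 < lam) :
    volume {x ∈ Ioo (0 : ℝ) 1 |
        ENNReal.ofReal lam < Aop (Set.indicator B (fun _ => (1 : ℝ))) x} ≤
      ENNReal.ofReal (1 / lam) * volume B := by
  calc volume {x ∈ Ioo (0 : ℝ) 1 |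
        ENNReal.ofReal lam < Aop (Set.indicator B (fun _ => (1 : ℝ))) x}
      ≤ volume (AopAux.U B lam) := measure_mono (AopAux.subset_U hB hB' hlam)
    _ = ENNReal.ofReal (1/lam) * (ENNReal.ofReal lam * volume (AopAux.U B lam)) := by
        rw [← mul_assoc, ← ENNReal.ofReal_mul (by positivity), one_div,
          inv_mul_cancel₀ hlam.ne', ENNReal.ofReal_one, one_mul]
    _ ≤ ENNReal.ofReal (1/lam) * volume B :=
        mul_le_mul_right (AopAux.main_bound hB hB' hlam) _
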